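/- For every integer m and real numbers p, ρ, the limit as l → ∞ of (1/(2π)) ∫_0^{2π} e^{i m ψ} (1 + (i p ρ/(2l)) e^{-iψ})^{l} (1 + (i p ρ/(2l)) e^{iψ})^{l} dψ equals (1/(2π)) ∫_0^{2π} e^{i p ρ cos ψ} e^{i m ψ} dψ. -/

import Mathlib

open Filter Complex Real intervalIntegral

lemma tendsto_one_add_div_pow_cexp (z : ℂ) :
    Tendsto (fun n : ℕ => (1 + z / n) ^ n) atTop (nhds (Complex.exp z)) := by
  have hlog : Tendsto (fun n : ℕ => (n : ℂ) * Complex.log (1 + z / n)) atTop (nhds z) := by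
    rw [tendsto_iff_norm_sub_tendsto_zero]
    have hbound : ∀ᶠ n : ℕ in atTop,
        ‖(n : ℂ) * Complex.log (1 + z / n) - z‖ ≤ ‖z‖ ^ 2 / n := by
      filter_upwards [eventually_ge_atTop (⌈2 * ‖z‖⌉₊ + 1)] with n hn
      have hn1 : (1 : ℕ) ≤ n := le_trans (Nat.le_add_left 1 _) hn
      have hnpos : (0 : ℝ) < n := by exact_mod_cast hn1
      have hzn : ‖z / n‖ ≤ 1 / 2 := by
        rw [norm_div, Complex.norm_natCast, div_le_div_iff₀ hnpos (by norm_num)]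
        have : 2 * ‖z‖ ≤ n := le_trans (Nat.le_ceil _) (by exact_mod_cast le_trans (Nat.le_succ _) hn)
        linarith
      have hlt : ‖z / n‖ < 1 := lt_of_le_of_lt hzn (by norm_num)
      have key := Complex.norm_log_one_add_sub_self_le hlt
      have hcn0 : (n : ℂ) ≠ 0 := Nat.cast_ne_zero.mpr (by omega)
      have hrw : (n : ℂ) * Complex.log (1 + z / n) - z
          = n * (Complex.log (1 + z / n) - z / n) := by
        rw [mul_sub, mul_div_cancel₀ _ hcn0]
      rw [hrw, norm_mul, Complex.norm_natCast]
      calc (n : ℝ) * ‖Complex.log (1 + z / n) - z / n‖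
          ≤ n * (‖z / n‖ ^ 2 * (1 - ‖z / n‖)⁻¹ / 2) := by
            exact mul_le_mul_of_nonneg_left key hnpos.le
        _ ≤ ‖z‖ ^ 2 / n := by
            have h1 : (1 - ‖z / n‖)⁻¹ ≤ 2 := by
              rw [inv_le_comm₀ (by linarith) (by norm_num)]
              linarith
            have h2 : ‖z / n‖ ^ 2 = ‖z‖ ^ 2 / n ^ 2 := by
              rw [norm_div, Complex.norm_natCast, div_pow]
            rw [h2]
            have hn0 : (n:ℝ) ≠ 0 := hnpos.ne'
            set c : ℝ := (1 - ‖z / (n:ℂ)‖)⁻¹ with hc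
            have hcpos : 0 ≤ c := inv_nonneg.mpr (by linarith)
            have e : (n:ℝ) * (‖z‖ ^ 2 / n ^ 2 * c / 2)
                = ‖z‖ ^ 2 * c / (2 * n) := by field_simp
            rw [e]
            calc ‖z‖ ^ 2 * c / (2 * n) ≤ ‖z‖ ^ 2 * 2 / (2 * n) := by gcongr
              _ = ‖z‖ ^ 2 / n := by field_simp
    have h0 : Tendsto (fun n : ℕ => ‖z‖ ^ 2 / (n:ℝ)) atTop (nhds 0) :=
      tendsto_const_nhds.div_atTop tendsto_natCast_atTop_atTop
    exact squeeze_zero' (Eventually.of_forall fun n => norm_nonneg _) hbound h0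
  have hne : ∀ᶠ n : ℕ in atTop, 1 + z / n ≠ 0 := by
    filter_upwards [eventually_ge_atTop (⌈2 * ‖z‖⌉₊ + 1)] with n hn
    have hn1 : (1 : ℕ) ≤ n := le_trans (Nat.le_add_left 1 _) hn
    have hnpos : (0 : ℝ) < n := by exact_mod_cast hn1
    have hzn : ‖z / n‖ ≤ 1 / 2 := by
      rw [norm_div, Complex.norm_natCast, div_le_div_iff₀ hnpos (by norm_num)]
      have : 2 * ‖z‖ ≤ n := le_trans (Nat.le_ceil _) (by exact_mod_cast le_trans (Nat.le_succ _) hn)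
      linarith
    intro h
    have : ‖(1 : ℂ)‖ = ‖z / n‖ := by
      rw [show z / n = -1 by linear_combination h]; simp
    simp only [norm_one] at this; linarith
  have := (Complex.continuous_exp.tendsto z).comp hlog
  apply this.congr'
  filter_upwards [hne] with n hn
  simp only [Function.comp_apply]
  conv_rhs => rw [← Complex.exp_log hn]
  rw [← Complex.exp_nat_mul]


/-- Contraction of the integral representation of Jacobi polynomials to the
Bessel-type integral of `E(2)` matrix elements. -/
theorem jacobi_to_bessel_contraction (m : ℤ) (p ρ : ℝ) :
    Tendsto
      (fun l : ℕ =>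
        (1 / (2 * (Real.pi : ℂ))) *
          ∫ ψ in (0:ℝ)..(2 * Real.pi),
            Complex.exp (Complex.I * (m : ℂ) * (ψ : ℂ)) *
              (1 + (Complex.I * (p : ℂ) * (ρ : ℂ) / (2 * (l : ℂ))) *
                Complex.exp (-(Complex.I) * (ψ : ℂ))) ^ l *
              (1 + (Complex.I * (p : ℂ) * (ρ : ℂ) / (2 * (l : ℂ))) *
                Complex.exp (Complex.I * (ψ : ℂ))) ^ l)
      atTop
      (nhds ((1 / (2 * (Real.pi : ℂ))) *
        ∫ ψ in (0:ℝ)..(2 * Real.pi),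
          Complex.exp (Complex.I * (p : ℂ) * (ρ : ℂ) * (Real.cos ψ : ℂ)) *
            Complex.exp (Complex.I * (m : ℂ) * (ψ : ℂ)))) := by
  apply Tendsto.const_mul
  apply intervalIntegral.tendsto_integral_filter_of_dominated_convergence
      (bound := fun _ => Real.exp (|p * ρ|))
  · -- measurability
    filter_upwards with l
    apply Continuous.aestronglyMeasurable
    fun_prop
  · -- bound
    filter_upwards [eventually_ge_atTop 1] with l hl
    filter_upwards with ψ _
    have hl0 : (0:ℝ) < l := by exact_mod_cast hl
    have hnorm_exp : ∀ t : ℝ, ‖Complex.exp (Complex.I * (t:ℂ))‖ = 1 := by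
      intro t
      rw [Complex.norm_exp]
      simp
    have hfac : ∀ w : ℂ, ‖w‖ = 1 →
        ‖(1 + (Complex.I * (p:ℂ) * (ρ:ℂ) / (2 * (l:ℂ))) * w) ^ l‖
          ≤ Real.exp (|p * ρ| / 2) := by
      intro w hw
      rw [norm_pow]
      have h1 : ‖1 + (Complex.I * (p:ℂ) * (ρ:ℂ) / (2 * (l:ℂ))) * w‖
          ≤ 1 + |p * ρ| / (2 * l) := by
        refine le_trans (norm_add_le _ _) ?_
        rw [norm_one]
        gcongr
        rw [norm_mul, hw, mul_one, norm_div, norm_mul, norm_mul]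
        simp [abs_mul]
      calc ‖1 + (Complex.I * (p:ℂ) * (ρ:ℂ) / (2 * (l:ℂ))) * w‖ ^ l
          ≤ (1 + |p * ρ| / (2 * l)) ^ l :=
            pow_le_pow_left₀ (norm_nonneg _) h1 l
        _ ≤ Real.exp (|p * ρ| / (2 * l)) ^ l :=
            pow_le_pow_left₀ (by positivity)
              (by linarith [Real.add_one_le_exp (|p * ρ| / (2 * l))]) l
        _ = Real.exp (l * (|p * ρ| / (2 * l))) := (Real.exp_nat_mul _ l).symm
        _ = Real.exp (|p * ρ| / 2) := by
            congr 1
            field_simp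
    calc ‖Complex.exp (Complex.I * (m : ℂ) * (ψ : ℂ)) *
              (1 + (Complex.I * (p : ℂ) * (ρ : ℂ) / (2 * (l : ℂ))) *
                Complex.exp (-(Complex.I) * (ψ : ℂ))) ^ l *
              (1 + (Complex.I * (p : ℂ) * (ρ : ℂ) / (2 * (l : ℂ))) *
                Complex.exp (Complex.I * (ψ : ℂ))) ^ l‖
        = ‖Complex.exp (Complex.I * (m : ℂ) * (ψ : ℂ))‖ *
            ‖(1 + (Complex.I * (p : ℂ) * (ρ : ℂ) / (2 * (l : ℂ))) *
                Complex.exp (-(Complex.I) * (ψ : ℂ))) ^ l‖ *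
            ‖(1 + (Complex.I * (p : ℂ) * (ρ : ℂ) / (2 * (l : ℂ))) *
                Complex.exp (Complex.I * (ψ : ℂ))) ^ l‖ := by
          rw [norm_mul, norm_mul]
      _ ≤ 1 * Real.exp (|p * ρ| / 2) * Real.exp (|p * ρ| / 2) := by
          have e1 : ‖Complex.exp (Complex.I * (m : ℂ) * (ψ : ℂ))‖ = 1 := by
            rw [mul_assoc, ← Complex.ofReal_intCast, ← Complex.ofReal_mul]
            exact hnorm_exp _
          have e2 : ‖Complex.exp (-(Complex.I) * (ψ:ℂ))‖ = 1 := by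
            rw [Complex.norm_exp]; simp
          have e3 : ‖Complex.exp (Complex.I * (ψ:ℂ))‖ = 1 := hnorm_exp ψ
          exact mul_le_mul (mul_le_mul e1.le (hfac _ e2) (norm_nonneg _) zero_le_one)
            (hfac _ e3) (norm_nonneg _) (by positivity)
      _ = Real.exp (|p * ρ|) := by
          rw [one_mul, ← Real.exp_add]
          norm_num
  · -- bound integrable
    exact intervalIntegrable_const
  · -- pointwise limit
    filter_upwards with ψ _
    have key : ∀ w : ℂ, Tendsto (fun l : ℕ =>
        (1 + (Complex.I * (p:ℂ) * (ρ:ℂ) / (2 * (l:ℂ))) * w) ^ l) atTop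
        (nhds (Complex.exp (Complex.I * p * ρ * w / 2))) := by
      intro w
      have heq : ∀ l : ℕ, (1 + (Complex.I * (p:ℂ) * (ρ:ℂ) / (2 * (l:ℂ))) * w)
          = 1 + (Complex.I * p * ρ * w / 2) / l := by
        intro l
        rw [div_mul_eq_mul_div, div_div, mul_comm (2:ℂ) (l:ℂ), ← div_div,
          mul_div_assoc]
      simp_rw [heq]
      exact tendsto_one_add_div_pow_cexp _
    have hlim := (tendsto_const_nhds (x := Complex.exp (Complex.I * (m:ℂ) * (ψ:ℂ)))
        (f := atTop (α := ℕ))).mul (key (Complex.exp (-(Complex.I) * (ψ:ℂ)))) |>.mul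
        (key (Complex.exp (Complex.I * (ψ:ℂ))))
    convert hlim using 2
    rw [← Complex.exp_add, ← Complex.exp_add, ← Complex.exp_add]
    congr 1
    rw [Complex.ofReal_cos, Complex.cos]
    have e1 : Complex.exp ((ψ:ℂ) * Complex.I) = Complex.exp (Complex.I * (ψ:ℂ)) := by
      congr 1; ring
    have e2 : Complex.exp (-(ψ:ℂ) * Complex.I)
        = Complex.exp (-(Complex.I) * (ψ:ℂ)) := by
      congr 1; ring
    rw [e1, e2]
    ring
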